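/- Let K, n be positive integers and for k=1,…,K let M_k be n×m_k column-interval (0,1)-matrices and M_k' integer matrices with M_k' ≡ M_k (mod 2) entrywise. Set A_k = M_k M_k^T and A_k' = M_k'(M_k')^T. Then for all t_k ≥ 0 and all 0 < p ≤ 1: (Σᵢ λᵢ(Σ_k t_k A_k)^p)^{1/p} ≤ (Σᵢ λᵢ(Σ_k t_k A_k')^p)^{1/p}, where λᵢ(A) denote the eigenvalues of the positive semidefinite matrix A. -/

import Mathlib

open scoped BigOperators
open Matrix MeasureTheory Set Filter Topology

/-- A square ℤ-matrix each of whose columns has entries in {0,1,-1}, with at most one `1`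
and at most one `-1`, has determinant in {0,1,-1}. -/
lemma sparse_det : ∀ (n : ℕ) (C : Matrix (Fin n) (Fin n) ℤ),
    (∀ i j, C i j = 0 ∨ C i j = 1 ∨ C i j = -1) →
    (∀ j i₁ i₂, C i₁ j = 1 → C i₂ j = 1 → i₁ = i₂) →
    (∀ j i₁ i₂, C i₁ j = -1 → C i₂ j = -1 → i₁ = i₂) →
    C.det = 0 ∨ C.det = 1 ∨ C.det = -1 := by
  intro n
  induction n with
  | zero => intro C _ _ _; right; left; exact Matrix.det_isEmpty
  | succ n ih =>
    intro C h01 hp hm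
    by_cases hcol : ∃ j i, ∀ i', C i' j ≠ 0 → i' = i
    · obtain ⟨j, i, hi⟩ := hcol
      rw [Matrix.det_succ_column C j]
      rw [Finset.sum_eq_single i]
      · have hminor := ih (C.submatrix i.succAbove j.succAbove)
          (fun i' j' => h01 _ _)
          (fun j' i₁ i₂ h1 h2 => Fin.succAbove_right_injective (hp _ _ _ h1 h2))
          (fun j' i₁ i₂ h1 h2 => Fin.succAbove_right_injective (hm _ _ _ h1 h2))
        have hsign : ((-1 : ℤ)) ^ ((i : ℕ) + (j : ℕ)) = 1 ∨ ((-1 : ℤ)) ^ ((i : ℕ) + (j : ℕ)) = -1 :=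
          ((i : ℕ) + (j : ℕ)).even_or_odd.imp Even.neg_one_pow Odd.neg_one_pow
        have mul3 : ∀ a b : ℤ, (a = 0 ∨ a = 1 ∨ a = -1) → (b = 0 ∨ b = 1 ∨ b = -1) →
            (a * b = 0 ∨ a * b = 1 ∨ a * b = -1) := by
          rintro a b (rfl | rfl | rfl) (rfl | rfl | rfl) <;> norm_num
        exact mul3 _ _ (mul3 _ _ (Or.inr hsign) (h01 i j)) hminor
      · intro i' _ hne
        have : C i' j = 0 := by
          by_contra h0
          exact hne (hi i' h0)
        simp [this]
      · intro h; exact absurd (Finset.mem_univ i) h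
    · push_neg at hcol
      left
      have hsum : ∀ j, ∑ i, C i j = 0 := by
        intro j
        obtain ⟨i₁, h1ne, _⟩ := hcol j 0
        obtain ⟨i₂, h2ne, h2i⟩ := hcol j i₁
        -- one of them is 1, the other -1
        have hv1 : C i₁ j = 1 ∨ C i₁ j = -1 := (h01 i₁ j).resolve_left h1ne
        have hv2 : C i₂ j = 1 ∨ C i₂ j = -1 := (h01 i₂ j).resolve_left h2ne
        obtain ⟨ip, im, hip, him, hipm⟩ :
            ∃ ip im, C ip j = 1 ∧ C im j = -1 ∧ ip ≠ im := by
          rcases hv1 with h1 | h1 <;> rcases hv2 with h2 | h2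
          · exact absurd (hp j i₂ i₁ h2 h1) h2i
          · exact ⟨i₁, i₂, h1, h2, fun h => h2i h.symm⟩
          · exact ⟨i₂, i₁, h2, h1, h2i⟩
          · exact absurd (hm j i₂ i₁ h2 h1) h2i
        have : ∀ i, C i j = (if i = ip then (1:ℤ) else 0) + (if i = im then (-1:ℤ) else 0) := by
          intro i
          rcases h01 i j with h | h | h
          · rw [h, if_neg, if_neg, add_zero]
            · rintro rfl; rw [h] at him; norm_num at him
            · rintro rfl; rw [h] at hip; norm_num at hip
          · rw [h, if_pos (hp j i ip h hip), if_neg, add_zero]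
            rintro rfl; rw [h] at him; norm_num at him
          · rw [h, if_neg, if_pos (hm j i im h him), zero_add]
            rintro rfl; rw [h] at hip; norm_num at hip
        simp only [this]
        rw [Finset.sum_add_distrib, Finset.sum_ite_eq' , Finset.sum_ite_eq']
        simp [hipm]
      rw [← Matrix.exists_vecMul_eq_zero_iff]
      refine ⟨fun _ => 1, ?_, ?_⟩
      · intro h
        have := congrFun h 0
        norm_num at this
      · funext j
        simp only [Matrix.vecMul, dotProduct, one_mul]
        exact hsum j


/-- Column-interval 0/1 matrices are totally unimodular (statement for the full square matrix). -/
lemma interval_det (n : ℕ) (C : Matrix (Fin n) (Fin n) ℤ)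
    (h01 : ∀ i j, C i j = 0 ∨ C i j = 1)
    (hint : ∀ j (i₁ i₂ i₃ : Fin n), i₁ ≤ i₂ → i₂ ≤ i₃ → C i₁ j = 1 → C i₃ j = 1 → C i₂ j = 1) :
    C.det = 0 ∨ C.det = 1 ∨ C.det = -1 := by
  set Δ : Matrix (Fin n) (Fin n) ℤ :=
    Matrix.of (fun i j => if j = i then 1 else if (j : ℕ) = (i : ℕ) + 1 then -1 else 0) with hΔ
  have hdetΔ : Δ.det = 1 := by
    rw [Matrix.det_of_upperTriangular]
    · simp [hΔ]
    · intro i j hji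
      have hj : (j : ℕ) < (i : ℕ) := hji
      simp only [hΔ, Matrix.of_apply]
      rw [if_neg (fun h => absurd (Fin.ext_iff.mp h) (by omega)), if_neg (by omega)]
  set D : Matrix (Fin n) (Fin n) ℤ :=
    Matrix.of (fun i j => C i j - (if hi : (i : ℕ) + 1 < n then C ⟨(i : ℕ) + 1, hi⟩ j else 0))
    with hD
  have hDC : D = Δ * C := by
    ext i j
    rw [Matrix.mul_apply]
    simp only [hD, hΔ, Matrix.of_apply]
    by_cases hi : (i : ℕ) + 1 < n
    · rw [dif_pos hi]
      set i1 : Fin n := ⟨(i : ℕ) + 1, hi⟩ with hi1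
      have : ∀ l : Fin n, (if l = i then (1:ℤ) else if (l : ℕ) = (i : ℕ) + 1 then -1 else 0) * C l j
          = (if l = i then C i j else 0) + (if l = i1 then -C i1 j else 0) := by
        intro l
        by_cases h1 : l = i
        · subst h1
          rw [if_pos rfl, if_pos rfl, if_neg, one_mul, add_zero]
          intro h
          have := Fin.ext_iff.mp h
          simp only [hi1, Fin.val_mk] at this
          omega
        · rw [if_neg h1, if_neg h1]
          by_cases h2 : (l : ℕ) = (i : ℕ) + 1
          · have : l = i1 := Fin.ext h2
            subst this
            rw [if_pos rfl, if_pos rfl, zero_add, neg_one_mul]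
          · rw [if_neg h2, if_neg, zero_mul, add_zero]
            intro h; exact h2 (Fin.ext_iff.mp h)
      rw [Finset.sum_congr rfl (fun l _ => this l), Finset.sum_add_distrib,
        Finset.sum_ite_eq' Finset.univ i, Finset.sum_ite_eq' Finset.univ i1]
      simp [sub_eq_add_neg]
    · rw [dif_neg hi, sub_zero]
      have : ∀ l : Fin n, (if l = i then (1:ℤ) else if (l : ℕ) = (i : ℕ) + 1 then -1 else 0) * C l j
          = (if l = i then C i j else 0) := by
        intro l
        by_cases h1 : l = i
        · subst h1; simp
        · rw [if_neg h1, if_neg h1, if_neg, zero_mul]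
          intro h; exact hi (h ▸ l.isLt)
      rw [Finset.sum_congr rfl (fun l _ => this l), Finset.sum_ite_eq' Finset.univ i]
      simp
  have hdet : D.det = C.det := by rw [hDC, Matrix.det_mul, hdetΔ, one_mul]
  rw [← hdet]
  -- helper facts about D's entries
  have hone : ∀ i j, D i j = 1 → C i j = 1 ∧ ∀ hi : (i:ℕ)+1 < n, C ⟨(i:ℕ)+1, hi⟩ j = 0 := by
    intro i j h
    simp only [hD, Matrix.of_apply] at h
    by_cases hi : (i:ℕ)+1 < n
    · rw [dif_pos hi] at h
      rcases h01 i j with h1 | h1 <;> rcases h01 ⟨(i:ℕ)+1, hi⟩ j with h2 | h2 <;>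
        rw [h1, h2] at h <;> first
        | (exact ⟨h1, fun _ => h2⟩)
        | (norm_num at h)
    · rw [dif_neg hi, sub_zero] at h
      exact ⟨h, fun h' => absurd h' hi⟩
  have hmone : ∀ i j, D i j = -1 → ∃ hi : (i:ℕ)+1 < n, C i j = 0 ∧ C ⟨(i:ℕ)+1, hi⟩ j = 1 := by
    intro i j h
    simp only [hD, Matrix.of_apply] at h
    by_cases hi : (i:ℕ)+1 < n
    · rw [dif_pos hi] at h
      rcases h01 i j with h1 | h1 <;> rcases h01 ⟨(i:ℕ)+1, hi⟩ j with h2 | h2 <;>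
        rw [h1, h2] at h <;> first
        | (exact ⟨hi, h1, h2⟩)
        | (norm_num at h)
    · rw [dif_neg hi, sub_zero] at h
      rcases h01 i j with h1 | h1 <;> rw [h1] at h <;> norm_num at h
  apply sparse_det
  · intro i j
    simp only [hD, Matrix.of_apply]
    by_cases hi : (i:ℕ)+1 < n
    · rw [dif_pos hi]
      rcases h01 i j with h1 | h1 <;> rcases h01 ⟨(i:ℕ)+1, hi⟩ j with h2 | h2 <;>
        rw [h1, h2] <;> norm_num
    · rw [dif_neg hi, sub_zero]; rcases h01 i j with h1 | h1 <;> simp [h1]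
  · -- at most one +1 per column
    intro j i₁ i₂ h1 h2
    by_contra hne
    have key : ∀ a b : Fin n, a < b → D a j = 1 → D b j = 1 → False := by
      intro a b hab ha hb
      obtain ⟨ha1, ha2⟩ := hone a j ha
      obtain ⟨hb1, _⟩ := hone b j hb
      have hlt : (a:ℕ)+1 < n := lt_of_le_of_lt (by exact_mod_cast hab) b.isLt
      have hmid : C ⟨(a:ℕ)+1, hlt⟩ j = 1 :=
        hint j a ⟨(a:ℕ)+1, hlt⟩ b (by simp [Fin.le_iff_val_le_val]) (by simp [Fin.le_iff_val_le_val]; omega) ha1 hb1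
      rw [ha2 hlt] at hmid; norm_num at hmid
    rcases lt_trichotomy i₁ i₂ with h | h | h
    · exact key i₁ i₂ h h1 h2
    · exact hne h
    · exact key i₂ i₁ h h2 h1
  · -- at most one -1 per column
    intro j i₁ i₂ h1 h2
    by_contra hne
    have key : ∀ a b : Fin n, a < b → D a j = -1 → D b j = -1 → False := by
      intro a b hab ha hb
      obtain ⟨hlta, ha0, ha1⟩ := hmone a j ha
      obtain ⟨hltb, hb0, hb1⟩ := hmone b j hb
      have hmid : C b j = 1 :=
        hint j ⟨(a:ℕ)+1, hlta⟩ b ⟨(b:ℕ)+1, hltb⟩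
          (by simp [Fin.le_iff_val_le_val]; exact_mod_cast hab)
          (by simp [Fin.le_iff_val_le_val]) ha1 hb1
      rw [hb0] at hmid; norm_num at hmid
    rcases lt_trichotomy i₁ i₂ with h | h | h
    · exact key i₁ i₂ h h1 h2
    · exact hne h
    · exact key i₂ i₁ h h2 h1


lemma det_sq_le (r : ℕ) (C C' : Matrix (Fin r) (Fin r) ℤ)
    (h01 : ∀ i j, C i j = 0 ∨ C i j = 1)
    (hint : ∀ j (i₁ i₂ i₃ : Fin r), i₁ ≤ i₂ → i₂ ≤ i₃ → C i₁ j = 1 → C i₃ j = 1 → C i₂ j = 1)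
    (hmod : ∀ i j, C' i j ≡ C i j [ZMOD 2]) :
    (C.det) ^ 2 ≤ (C'.det) ^ 2 := by
  have cast_iff : ∀ a b : ℤ, ((a : ZMod 2) = (b : ZMod 2)) ↔ a ≡ b [ZMOD 2] := by
    intro a b
    simpa using ZMod.intCast_eq_intCast_iff a b 2
  have hdmod : C'.det ≡ C.det [ZMOD 2] := by
    rw [← cast_iff]
    have h1 : ((C'.det : ZMod 2)) = ((C'.map ((↑) : ℤ → ZMod 2)).det) :=
      RingHom.map_det (Int.castRingHom (ZMod 2)) C'
    have h2 : ((C.det : ZMod 2)) = ((C.map ((↑) : ℤ → ZMod 2)).det) :=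
      RingHom.map_det (Int.castRingHom (ZMod 2)) C
    rw [h1, h2]
    congr 1
    ext i j
    simp only [Matrix.map_apply]
    exact (cast_iff _ _).mpr (hmod i j)
  rcases interval_det r C h01 hint with h | h | h
  · rw [h]; positivity
  · rw [h]
    have hne : C'.det ≠ 0 := by
      intro h0
      rw [h0, h] at hdmod
      have := (cast_iff _ _).mpr hdmod
      norm_num at this
    calc (1:ℤ)^2 = 1 := one_pow 2
    _ ≤ |C'.det| ^ 2 := by
        have := Int.one_le_abs hne
        nlinarith [abs_nonneg C'.det]
    _ = C'.det ^ 2 := sq_abs _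
  · rw [h]
    have hne : C'.det ≠ 0 := by
      intro h0
      rw [h0, h] at hdmod
      have := (cast_iff _ _).mpr hdmod
      norm_num at this
    calc (-1:ℤ)^2 = 1 := by norm_num
    _ ≤ |C'.det| ^ 2 := by
        have := Int.one_le_abs hne
        nlinarith [abs_nonneg C'.det]
    _ = C'.det ^ 2 := sq_abs _


variable {n : ℕ} {ι : Type*} [Fintype ι] [DecidableEq ι]

noncomputable local instance : DecidablePred (Function.Injective : (Fin n → ι) → Prop) :=
  fun _ => Classical.dec _

/-- Weighted Cauchy–Binet: determinant of `B * diagonal w * Bᵀ` as an average of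
weighted squares of column-submatrix determinants. -/
lemma det_weighted_gram (B : Matrix (Fin n) ι ℝ) (w : ι → ℝ) :
    (B * Matrix.diagonal w * Bᵀ).det
      = (n.factorial : ℝ)⁻¹ *
        ∑ g ∈ Finset.univ.filter (fun g : Fin n → ι => Function.Injective g),
          (∏ i, w (g i)) * (Matrix.det (B.submatrix id g)) ^ 2 := by
  classical
  set f := (Matrix.detRowAlternating : ((Fin n → ℝ) [⋀^Fin n]→ₗ[ℝ] ℝ))
  set T : (Fin n → ι) → ℝ :=
    fun g => (∏ i, (B i (g i) * w (g i))) * Matrix.det (Matrix.of fun i j => B j (g i)) with hT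
  have step1 : (B * Matrix.diagonal w * Bᵀ).det = ∑ g : Fin n → ι, T g := by
    have hrow : ∀ i, (B * Matrix.diagonal w * Bᵀ) i
        = ∑ l : ι, (B i l * w l) • (fun j => B j l) := by
      intro i
      funext j
      simp only [Finset.sum_apply, Pi.smul_apply, smul_eq_mul]
      rw [Matrix.mul_apply]
      congr 1
      funext l
      rw [Matrix.mul_diagonal, Matrix.transpose_apply]
    have : (B * Matrix.diagonal w * Bᵀ).det
        = f.toMultilinearMap (fun i => ∑ l : ι, (B i l * w l) • (fun j => B j l)) := by
      rw [← funext hrow]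
      rfl
    rw [this, f.toMultilinearMap.map_sum]
    refine Finset.sum_congr rfl fun g _ => ?_
    exact (f.toMultilinearMap.map_smul_univ _ _).trans (by rw [smul_eq_mul]; rfl)
  have step2 : ∑ g : Fin n → ι, T g
      = ∑ g ∈ Finset.univ.filter (fun g : Fin n → ι => Function.Injective g), T g := by
    rw [← Finset.sum_filter_add_sum_filter_not Finset.univ
      (fun g : Fin n → ι => Function.Injective g) T]
    have : ∀ g ∈ Finset.univ.filter (fun g : Fin n → ι => ¬ Function.Injective g), T g = 0 := by
      intro g hg
      simp only [Finset.mem_filter] at hg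
      obtain ⟨i, i', hgi, hne⟩ := Function.not_injective_iff.mp hg.2
      have : Matrix.det (Matrix.of fun i j => B j (g i)) = 0 :=
        Matrix.det_zero_of_row_eq hne (by funext j; simp [hgi])
      simp only [hT, this, mul_zero]
    rw [Finset.sum_eq_zero this, add_zero]
  -- key permutation identity
  have step3 : ∀ g : Fin n → ι, ∑ σ : Equiv.Perm (Fin n), T (g ∘ σ)
      = (∏ i, w (g i)) * (Matrix.det (B.submatrix id g)) ^ 2 := by
    intro g
    have hdet : ∀ σ : Equiv.Perm (Fin n),
        Matrix.det (Matrix.of fun i j => B j (g (σ i)))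
          = ((Equiv.Perm.sign σ : ℤ) : ℝ) * Matrix.det (Matrix.of fun i j => B j (g i)) :=
      fun σ => Matrix.det_permute σ (Matrix.of fun i j => B j (g i))
    have : ∀ σ : Equiv.Perm (Fin n), T (g ∘ σ)
        = (∏ i, w (g i)) * Matrix.det (Matrix.of fun i j => B j (g i))
            * (((Equiv.Perm.sign σ : ℤ) : ℝ) * ∏ i, B i (g (σ i))) := by
      intro σ
      rw [hT]
      simp only [Function.comp_apply]
      rw [Finset.prod_mul_distrib, hdet σ]
      have hw : ∏ i, w (g (σ i)) = ∏ i, w (g i) := Equiv.prod_comp σ (fun i => w (g i))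
      rw [hw]
      ring
    rw [Finset.sum_congr rfl (fun σ _ => this σ), ← Finset.mul_sum]
    have hsum : ∑ σ : Equiv.Perm (Fin n), (((Equiv.Perm.sign σ : ℤ) : ℝ) * ∏ i, B i (g (σ i)))
        = Matrix.det (Matrix.of fun i j => B j (g i)) := by
      rw [Matrix.det_apply']
      exact Finset.sum_congr rfl fun σ _ => by simp [Matrix.of_apply]
    have hsub : Matrix.det (Matrix.of fun i j => B j (g i))
        = Matrix.det (B.submatrix id g) := by
      rw [← Matrix.det_transpose (B.submatrix id g)]
      congr 1
    rw [hsum, hsub]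
    ring
  -- averaging over permutations
  have step4 : ∀ σ : Equiv.Perm (Fin n),
      ∑ g ∈ Finset.univ.filter (fun g : Fin n → ι => Function.Injective g), T (g ∘ σ)
        = ∑ g ∈ Finset.univ.filter (fun g : Fin n → ι => Function.Injective g), T g := by
    intro σ
    apply Finset.sum_nbij' (fun g => g ∘ σ) (fun g => g ∘ σ.symm)
    · intro g hg
      simp only [Finset.mem_filter, Finset.mem_univ, true_and] at hg ⊢
      exact hg.comp σ.injective
    · intro g hg
      simp only [Finset.mem_filter, Finset.mem_univ, true_and] at hg ⊢
      exact hg.comp σ.symm.injective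
    · intro g _; funext i; simp
    · intro g _; funext i; simp
    · intro g _; rfl
  have step5 : (n.factorial : ℝ) *
      ∑ g ∈ Finset.univ.filter (fun g : Fin n → ι => Function.Injective g), T g
      = ∑ g ∈ Finset.univ.filter (fun g : Fin n → ι => Function.Injective g),
          (∏ i, w (g i)) * (Matrix.det (B.submatrix id g)) ^ 2 := by
    calc (n.factorial : ℝ) * ∑ g ∈ Finset.univ.filter
            (fun g : Fin n → ι => Function.Injective g), T g
        = ∑ _σ : Equiv.Perm (Fin n), ∑ g ∈ Finset.univ.filter
            (fun g : Fin n → ι => Function.Injective g), T g := by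
          rw [Finset.sum_const, Finset.card_univ, Fintype.card_perm]
          simp [nsmul_eq_mul]
      _ = ∑ σ : Equiv.Perm (Fin n), ∑ g ∈ Finset.univ.filter
            (fun g : Fin n → ι => Function.Injective g), T (g ∘ σ) := by
          exact Finset.sum_congr rfl fun σ _ => (step4 σ).symm
      _ = ∑ g ∈ Finset.univ.filter (fun g : Fin n → ι => Function.Injective g),
            ∑ σ : Equiv.Perm (Fin n), T (g ∘ σ) := Finset.sum_comm
      _ = _ := Finset.sum_congr rfl fun g _ => step3 g
  rw [step1, step2, ← step5, ← mul_assoc, inv_mul_cancel₀ (by positivity), one_mul]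


lemma det_gram_le {n : ℕ} {ι : Type*} [Fintype ι] [DecidableEq ι]
    (B B' : Matrix (Fin n) ι ℤ)
    (h01 : ∀ i l, B i l = 0 ∨ B i l = 1)
    (hint : ∀ l (i₁ i₂ i₃ : Fin n), i₁ ≤ i₂ → i₂ ≤ i₃ → B i₁ l = 1 → B i₃ l = 1 → B i₂ l = 1)
    (hmod : ∀ i l, B' i l ≡ B i l [ZMOD 2])
    (w : ι → ℝ) (hw : ∀ l, 0 ≤ w l) :
    ((B.map ((↑) : ℤ → ℝ)) * Matrix.diagonal w * (B.map ((↑) : ℤ → ℝ))ᵀ).det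
      ≤ ((B'.map ((↑) : ℤ → ℝ)) * Matrix.diagonal w * (B'.map ((↑) : ℤ → ℝ))ᵀ).det := by
  rw [det_weighted_gram, det_weighted_gram]
  apply mul_le_mul_of_nonneg_left _ (by positivity)
  apply Finset.sum_le_sum
  intro g _
  apply mul_le_mul_of_nonneg_left _ (Finset.prod_nonneg fun i _ => hw (g i))
  have hsub : ∀ (D : Matrix (Fin n) ι ℤ),
      (D.map ((↑) : ℤ → ℝ)).submatrix id g = (D.submatrix id g).map ((↑) : ℤ → ℝ) := by
    intro D; ext i j; rfl
  rw [hsub, hsub]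
  have hdet : ∀ (D : Matrix (Fin n) ι ℤ),
      ((D.submatrix id g).map ((↑) : ℤ → ℝ)).det = (((D.submatrix id g).det : ℤ) : ℝ) := by
    intro D
    exact (RingHom.map_det (Int.castRingHom ℝ) (D.submatrix id g)).symm
  rw [hdet, hdet]
  have key : ((B.submatrix id g).det) ^ 2 ≤ ((B'.submatrix id g).det) ^ 2 := by
    apply det_sq_le n (B.submatrix id g) (B'.submatrix id g)
    · intro i j; exact h01 i (g j)
    · intro j i₁ i₂ i₃ h12 h23 ha hb; exact hint (g j) i₁ i₂ i₃ h12 h23 ha hb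
    · intro i j; exact hmod i (g j)
  calc (((B.submatrix id g).det : ℤ) : ℝ) ^ 2
      = ((((B.submatrix id g).det) ^ 2 : ℤ) : ℝ) := by push_cast; ring
    _ ≤ ((((B'.submatrix id g).det) ^ 2 : ℤ) : ℝ) := by exact_mod_cast key
    _ = (((B'.submatrix id g).det : ℤ) : ℝ) ^ 2 := by push_cast; ring


lemma det_one_add_le {K n : ℕ} (m : Fin K → ℕ)
    (M M' : ∀ k : Fin K, Matrix (Fin n) (Fin (m k)) ℤ)
    (h01 : ∀ k i j, M k i j = 0 ∨ M k i j = 1)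
    (hint : ∀ k j, ∀ i₁ i₂ i₃ : Fin n, i₁ ≤ i₂ → i₂ ≤ i₃ →
      M k i₁ j = 1 → M k i₃ j = 1 → M k i₂ j = 1)
    (hmod : ∀ k i j, M' k i j ≡ M k i j [ZMOD 2])
    (c : Fin K → ℝ) (hc : ∀ k, 0 ≤ c k) :
    (1 + ∑ k, c k • ((M k * (M k)ᵀ).map ((↑) : ℤ → ℝ))).det
      ≤ (1 + ∑ k, c k • ((M' k * (M' k)ᵀ).map ((↑) : ℤ → ℝ))).det := by
  classical
  set ι : Type := (Σ k : Fin K, Fin (m k)) ⊕ Fin n with hι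
  set Bf : (∀ k : Fin K, Matrix (Fin n) (Fin (m k)) ℤ) → Matrix (Fin n) ι ℤ :=
    fun N => Matrix.of fun i l =>
      Sum.elim (fun kl : Σ k : Fin K, Fin (m k) => N kl.1 i kl.2)
        (fun j : Fin n => if i = j then 1 else 0) l with hBf
  set w : ι → ℝ := Sum.elim (fun kl : Σ k : Fin K, Fin (m k) => c kl.1) (fun _ => 1) with hw
  have hentry : ∀ N : (∀ k : Fin K, Matrix (Fin n) (Fin (m k)) ℤ),
      ((Bf N).map ((↑) : ℤ → ℝ)) * Matrix.diagonal w * ((Bf N).map ((↑) : ℤ → ℝ))ᵀ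
        = 1 + ∑ k, c k • ((N k * (N k)ᵀ).map ((↑) : ℤ → ℝ)) := by
    intro N
    ext i j
    rw [Matrix.mul_apply]
    simp only [Matrix.mul_diagonal, Matrix.transpose_apply, Matrix.map_apply]
    rw [Fintype.sum_sum_type]
    have part1 : ∑ kl : Σ k : Fin K, Fin (m k),
        ((Bf N i (Sum.inl kl) : ℤ) : ℝ) * w (Sum.inl kl) * ((Bf N j (Sum.inl kl) : ℤ) : ℝ)
        = ∑ k, c k * (((N k * (N k)ᵀ) i j : ℤ) : ℝ) := by
      rw [← Finset.univ_sigma_univ, Finset.sum_sigma]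
      refine Finset.sum_congr rfl fun k _ => ?_
      simp only [hBf, hw, Matrix.of_apply, Sum.elim_inl]
      rw [Matrix.mul_apply]
      push_cast
      rw [Finset.mul_sum]
      refine Finset.sum_congr rfl fun j' _ => ?_
      simp [Matrix.transpose_apply]
      ring
    have part2 : ∑ j' : Fin n,
        ((Bf N i (Sum.inr j') : ℤ) : ℝ) * w (Sum.inr j') * ((Bf N j (Sum.inr j') : ℤ) : ℝ)
        = if i = j then 1 else 0 := by
      simp only [hBf, hw, Matrix.of_apply, Sum.elim_inr, mul_one]
      push_cast [apply_ite ((↑) : ℤ → ℝ)]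
      simp only [ite_mul, one_mul, zero_mul]
      rw [Finset.sum_ite_eq Finset.univ i]
      simp [eq_comm]
    rw [part1, part2]
    simp only [Matrix.add_apply, Matrix.one_apply, Matrix.sum_apply, Matrix.smul_apply,
      Matrix.map_apply, smul_eq_mul]
    ring
  rw [← hentry M, ← hentry M']
  apply det_gram_le
  · intro i l
    rcases l with kl | j'
    · exact h01 kl.1 i kl.2
    · simp only [hBf, Matrix.of_apply, Sum.elim_inr]
      split <;> simp
  · intro l i₁ i₂ i₃ h12 h23 ha hb
    rcases l with kl | j'
    · exact hint kl.1 kl.2 i₁ i₂ i₃ h12 h23 ha hb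
    · simp only [hBf, Matrix.of_apply, Sum.elim_inr] at ha hb ⊢
      have e1 : i₁ = j' := by by_contra hne; rw [if_neg hne] at ha; norm_num at ha
      have e3 : i₃ = j' := by by_contra hne; rw [if_neg hne] at hb; norm_num at hb
      have : i₂ = j' := le_antisymm (e3 ▸ h23) (e1 ▸ h12)
      rw [if_pos this]
  · intro i l
    rcases l with kl | j'
    · exact hmod kl.1 i kl.2
    · exact Int.ModEq.refl _
  · intro l
    rcases l with kl | j'
    · exact hc kl.1
    · exact zero_le_one


lemma psd_of_sum_gram {K : ℕ} (m : Fin K → ℕ)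
    (M : ∀ k : Fin K, Matrix (Fin n) (Fin (m k)) ℤ)
    (t : Fin K → ℝ) (ht : ∀ k, 0 ≤ t k)
    (A : Matrix (Fin n) (Fin n) ℝ)
    (hAdef : A = ∑ k, t k • ((M k * (M k)ᵀ).map ((↑) : ℤ → ℝ))) :
    A.PosSemidef := by
  rw [hAdef]
  refine Finset.sum_induction (fun k => t k • ((M k * (M k)ᵀ).map ((↑) : ℤ → ℝ)))
    (fun X : Matrix (Fin n) (Fin n) ℝ => X.PosSemidef)
    (fun a b ha hb => ha.add hb) Matrix.PosSemidef.zero ?_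
  intro k _
  have hgram : ((M k * (M k)ᵀ).map ((↑) : ℤ → ℝ)).PosSemidef := by
    have : ((M k * (M k)ᵀ).map ((↑) : ℤ → ℝ))
        = (M k).map ((↑) : ℤ → ℝ) * ((M k).map ((↑) : ℤ → ℝ))ᵀ := by
      ext i j
      simp only [Matrix.map_apply, Matrix.mul_apply, Matrix.transpose_apply]
      push_cast
      rfl
    rw [this, ← Matrix.conjTranspose_eq_transpose_of_trivial]
    exact Matrix.posSemidef_self_mul_conjTranspose _
  rw [Matrix.posSemidef_iff_dotProduct_mulVec]
  constructor
  · show (t k • ((M k * (M k)ᵀ).map ((↑) : ℤ → ℝ)))ᴴ = _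
    rw [Matrix.conjTranspose_smul, hgram.isHermitian.eq]
    simp
  · intro x
    rw [Matrix.smul_mulVec, dotProduct_smul]
    exact smul_nonneg (ht k) (hgram.dotProduct_mulVec_nonneg x)

lemma det_one_add_smul (A : Matrix (Fin n) (Fin n) ℝ) (hA : A.IsHermitian) (s : ℝ) :
    (1 + s • A).det = ∏ i, (1 + s * hA.eigenvalues i) := by
  conv_lhs => rw [hA.spectral_theorem]
  set U : Matrix (Fin n) (Fin n) ℝ := (hA.eigenvectorUnitary : Matrix (Fin n) (Fin n) ℝ) with hU
  set D : Matrix (Fin n) (Fin n) ℝ := Matrix.diagonal (RCLike.ofReal ∘ hA.eigenvalues) with hD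
  have hUU : U * star U = 1 := Matrix.mem_unitaryGroup_iff.mp hA.eigenvectorUnitary.2
  have h1 : (1 : Matrix (Fin n) (Fin n) ℝ) + s • (U * D * star U)
      = U * (1 + s • D) * star U := by
    rw [Matrix.mul_add, Matrix.add_mul, Matrix.mul_one, hUU]
    congr 1
    rw [Matrix.mul_smul, Matrix.smul_mul]
  rw [show (Unitary.conjStarAlgAut ℝ _ hA.eigenvectorUnitary) D = U * D * star U from rfl]
  rw [h1, Matrix.det_mul, Matrix.det_mul]
  have h2 : (1 + s • D).det = ∏ i, (1 + s * hA.eigenvalues i) := by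
    rw [hD]
    have : (1 : Matrix (Fin n) (Fin n) ℝ) + s • Matrix.diagonal (RCLike.ofReal ∘ hA.eigenvalues)
        = Matrix.diagonal (fun i => 1 + s * hA.eigenvalues i) := by
      rw [← Matrix.diagonal_one, ← Matrix.diagonal_smul, ← Matrix.diagonal_add]
      congr 1
    rw [this, Matrix.det_diagonal]
  rw [h2]
  have h3 : U.det * (star U).det = 1 := by
    rw [← Matrix.det_mul, hUU, Matrix.det_one]
  calc U.det * (∏ i, (1 + s * hA.eigenvalues i)) * (star U).det
      = (U.det * (star U).det) * ∏ i, (1 + s * hA.eigenvalues i) := by ring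
    _ = ∏ i, (1 + s * hA.eigenvalues i) := by rw [h3, one_mul]


/-- p=1 case : from the log comparison, the sums compare. -/
lemma sum_le_of_log (N : ℕ) (a b : Fin N → ℝ)
    (h : ∀ t : ℝ, 0 < t → ∑ i, Real.log (1 + t * a i) ≤ ∑ i, Real.log (1 + t * b i)) :
    ∑ i, a i ≤ ∑ i, b i := by
  have lim : ∀ x : ℝ, Tendsto (fun t => Real.log (1 + t * x) / t) (𝓝[>] 0) (𝓝 x) := by
    intro x
    have hd : HasDerivAt (fun t : ℝ => Real.log (1 + t * x)) x 0 := by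
      have h1 : HasDerivAt (fun t : ℝ => 1 + t * x) x 0 := by
        simpa using ((hasDerivAt_id (0:ℝ)).mul_const x).const_add 1
      have h2 := (Real.hasDerivAt_log (by norm_num : (1:ℝ) + 0 * x ≠ 0)).comp 0 h1
      simpa using h1.log (by norm_num : (1:ℝ) + 0 * x ≠ 0)
    have h2 := hasDerivAt_iff_tendsto_slope.mp hd
    have h3 : Tendsto (slope (fun t : ℝ => Real.log (1 + t * x)) 0) (𝓝[>] 0) (𝓝 x) :=
      h2.mono_left (nhdsWithin_mono 0 (fun y hy => ne_of_gt hy))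
    refine h3.congr' ?_
    filter_upwards [self_mem_nhdsWithin] with t ht
    simp [slope_def_field, Real.log_one]
  have limA : Tendsto (fun t => (∑ i, Real.log (1 + t * a i)) / t) (𝓝[>] 0) (𝓝 (∑ i, a i)) := by
    simp only [Finset.sum_div]
    exact tendsto_finset_sum _ (fun i _ => lim (a i))
  have limB : Tendsto (fun t => (∑ i, Real.log (1 + t * b i)) / t) (𝓝[>] 0) (𝓝 (∑ i, b i)) := by
    simp only [Finset.sum_div]
    exact tendsto_finset_sum _ (fun i _ => lim (b i))
  refine le_of_tendsto_of_tendsto limA limB ?_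
  filter_upwards [self_mem_nhdsWithin] with t ht
  exact div_le_div_of_nonneg_right (h t ht) (mem_Ioi.mp ht).le


section PLT1
variable {p : ℝ}

/-- integrability of `log(1+u) * u^(-1-p)` on `(0,∞)` for `0<p<1`. -/
lemma phi_integrable (hp0 : 0 < p) (hp1 : p < 1) :
    IntegrableOn (fun u : ℝ => Real.log (1 + u) * u ^ (-1 - p)) (Ioi 0) := by
  have hcont : ContinuousOn (fun u : ℝ => Real.log (1 + u) * u ^ (-1 - p)) (Ioi 0) := by
    intro u hu
    have hu0 : (0:ℝ) < u := hu
    apply ContinuousAt.continuousWithinAt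
    exact ((Real.continuousAt_log (ne_of_gt (by show (0:ℝ) < 1 + u; linarith))).comp
      ((continuous_const.add continuous_id).continuousAt)).mul
      (Real.continuousAt_rpow_const u _ (Or.inl hu0.ne'))
  have h1 : IntegrableOn (fun u : ℝ => Real.log (1 + u) * u ^ (-1 - p)) (Ioc 0 1) := by
    have hg : IntegrableOn (fun u : ℝ => u ^ (-p)) (Ioc 0 1) := by
      have := intervalIntegral.intervalIntegrable_rpow' (a := 0) (b := 1)
        (by linarith : (-1:ℝ) < -p)
      rwa [intervalIntegrable_iff_integrableOn_Ioc_of_le zero_le_one] at this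
    refine Integrable.mono' hg ((hcont.mono Ioc_subset_Ioi_self).aestronglyMeasurable measurableSet_Ioc) ?_
    refine (ae_restrict_iff' measurableSet_Ioc).mpr (ae_of_all _ ?_)
    intro u hu
    obtain ⟨hu0, _⟩ := hu
    have hlog0 : 0 ≤ Real.log (1 + u) := Real.log_nonneg (by linarith)
    have hrp : (0:ℝ) ≤ u ^ (-1 - p) := Real.rpow_nonneg hu0.le _
    rw [Real.norm_eq_abs, abs_of_nonneg (mul_nonneg hlog0 hrp)]
    have hlog : Real.log (1 + u) ≤ u := by
      have := Real.log_le_sub_one_of_pos (by linarith : (0:ℝ) < 1 + u)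
      linarith
    calc Real.log (1 + u) * u ^ (-1 - p) ≤ u * u ^ (-1 - p) :=
          mul_le_mul_of_nonneg_right hlog hrp
      _ = u ^ (-p) := by
          nth_rewrite 1 [← Real.rpow_one u]
          rw [← Real.rpow_add hu0]
          ring_nf
  have h2 : IntegrableOn (fun u : ℝ => Real.log (1 + u) * u ^ (-1 - p)) (Ioi 1) := by
    have hg : IntegrableOn (fun u : ℝ => (2 / p * 2 ^ (p/2)) * u ^ (p/2 - 1 - p)) (Ioi 1) := by
      exact (integrableOn_Ioi_rpow_of_lt (by linarith) one_pos).const_mul _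
    refine Integrable.mono' hg ((hcont.mono (Ioi_subset_Ioi zero_le_one)).aestronglyMeasurable measurableSet_Ioi) ?_
    refine (ae_restrict_iff' measurableSet_Ioi).mpr (ae_of_all _ ?_)
    intro u hu
    have hu1 : (1:ℝ) < u := hu
    have hu0 : (0:ℝ) < u := lt_trans one_pos hu1
    have hlog0 : 0 ≤ Real.log (1 + u) := Real.log_nonneg (by linarith)
    have hrp : (0:ℝ) ≤ u ^ (-1 - p) := Real.rpow_nonneg hu0.le _
    rw [Real.norm_eq_abs, abs_of_nonneg (mul_nonneg hlog0 hrp)]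
    have hlog : Real.log (1 + u) ≤ 2 / p * (2 ^ (p/2) * u ^ (p/2)) := by
      have hle := Real.log_le_rpow_div (by linarith : (0:ℝ) ≤ 1 + u)
        (by linarith : (0:ℝ) < p / 2)
      have h2u : ((1:ℝ) + u) ^ (p/2) ≤ (2*u) ^ (p/2) :=
        Real.rpow_le_rpow (by linarith) (by linarith) (by linarith)
      have hmul : ((2:ℝ)*u) ^ (p/2) = 2 ^ (p/2) * u ^ (p/2) :=
        Real.mul_rpow (by norm_num) hu0.le
      calc Real.log (1 + u) ≤ (1 + u) ^ (p/2) / (p/2) := hle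
        _ = (1 + u) ^ (p/2) * (2 / p) := by rw [div_div_eq_mul_div]; ring
        _ ≤ (2*u) ^ (p/2) * (2 / p) := by
            apply mul_le_mul_of_nonneg_right h2u
            positivity
        _ = 2 / p * (2 ^ (p/2) * u ^ (p/2)) := by rw [hmul]; ring
    calc Real.log (1 + u) * u ^ (-1 - p)
        ≤ (2 / p * (2 ^ (p/2) * u ^ (p/2))) * u ^ (-1 - p) :=
          mul_le_mul_of_nonneg_right hlog hrp
      _ = (2 / p * 2 ^ (p/2)) * (u ^ (p/2) * u ^ (-1 - p)) := by ring
      _ = (2 / p * 2 ^ (p/2)) * u ^ (p/2 - 1 - p) := by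
          rw [← Real.rpow_add hu0]; ring_nf
  have := h1.union h2
  rwa [Set.Ioc_union_Ioi_eq_Ioi zero_le_one] at this

end PLT1


lemma phi_pos {p : ℝ} (hp0 : 0 < p) (hp1 : p < 1) :
    0 < ∫ u in Ioi (0:ℝ), Real.log (1 + u) * u ^ (-1 - p) := by
  rw [setIntegral_pos_iff_support_of_nonneg_ae]
  · have hsub : Ioi (0:ℝ) ⊆ Function.support (fun u : ℝ => Real.log (1 + u) * u ^ (-1 - p)) := by
      intro u hu
      have hu0 : (0:ℝ) < u := hu
      have h1 : 0 < Real.log (1 + u) := Real.log_pos (by linarith)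
      have h2 : 0 < u ^ (-1 - p) := Real.rpow_pos_of_pos hu0 _
      exact ne_of_gt (mul_pos h1 h2)
    have : (Function.support (fun u : ℝ => Real.log (1 + u) * u ^ (-1 - p)) ∩ Ioi 0) = Ioi 0 :=
      Set.inter_eq_self_of_subset_right hsub
    rw [this]
    simp [Real.volume_Ioi]
  · refine (ae_restrict_iff' measurableSet_Ioi).mpr (ae_of_all _ ?_)
    intro u hu
    have hu0 : (0:ℝ) < u := hu
    exact mul_nonneg (Real.log_nonneg (by linarith)) (Real.rpow_nonneg hu0.le _)
  · exact phi_integrable hp0 hp1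

/-- scaling: for `x > 0`, integrability and the value of `∫ log(1+t x) t^{-1-p}`. -/
lemma scaled_int {p : ℝ} (hp0 : 0 < p) (hp1 : p < 1) {x : ℝ} (hx : 0 ≤ x) :
    IntegrableOn (fun t : ℝ => Real.log (1 + t * x) * t ^ (-1 - p)) (Ioi 0) ∧
    ∫ t in Ioi (0:ℝ), Real.log (1 + t * x) * t ^ (-1 - p)
      = (∫ u in Ioi (0:ℝ), Real.log (1 + u) * u ^ (-1 - p)) * x ^ p := by
  rcases eq_or_lt_of_le hx with h0 | hxpos
  · constructor
    · apply (integrable_zero _ _ _).congr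
      refine (ae_of_all _ ?_)
      intro t
      simp [← h0]
    · rw [← h0, Real.zero_rpow hp0.ne', mul_zero]
      rw [show (fun t : ℝ => Real.log (1 + t * 0) * t ^ (-1 - p)) = fun _ => (0:ℝ) by
        funext t; simp]
      simp
  · set φ : ℝ → ℝ := fun u => Real.log (1 + u) * u ^ (-1 - p) with hφ
    have heq : ∀ t ∈ Ioi (0:ℝ),
        Real.log (1 + t * x) * t ^ (-1 - p) = x ^ (1 + p) * φ (x * t) := by
      intro t ht
      have ht0 : (0:ℝ) < t := ht
      have hxx : x ^ (1+p) * x ^ (-1-p) = 1 := by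
        have h0 : (1+p) + (-1-p) = 0 := by ring
        rw [← Real.rpow_add hxpos, h0, Real.rpow_zero]
      calc Real.log (1 + t*x) * t ^ (-1-p)
          = (x^(1+p) * x^(-1-p)) * Real.log (1 + x*t) * t^(-1-p) := by
            rw [hxx, mul_comm t x]; ring
        _ = x^(1+p) * (Real.log (1+x*t) * (x^(-1-p) * t^(-1-p))) := by ring
        _ = x^(1+p) * φ (x*t) := by
            simp only [hφ]
            rw [Real.mul_rpow hxpos.le ht0.le]
    have hint : IntegrableOn (fun t : ℝ => x ^ (1+p) * φ (x * t)) (Ioi 0) := by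
      have := (integrableOn_Ioi_comp_mul_left_iff φ 0 hxpos).mpr
        (by rw [mul_zero]; exact phi_integrable hp0 hp1)
      exact this.const_mul _
    constructor
    · exact hint.congr_fun (fun t ht => (heq t ht).symm) measurableSet_Ioi
    · rw [setIntegral_congr_fun measurableSet_Ioi heq]
      rw [MeasureTheory.integral_const_mul]
      rw [integral_comp_mul_left_Ioi φ 0 hxpos, mul_zero]
      simp only [smul_eq_mul]
      have hxp : x ^ (1+p) * x⁻¹ = x ^ p := by
        rw [← Real.rpow_neg_one x, ← Real.rpow_add hxpos]
        ring_nf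
      calc x ^ (1+p) * (x⁻¹ * ∫ u in Ioi (0:ℝ), φ u)
          = (x ^ (1+p) * x⁻¹) * ∫ u in Ioi (0:ℝ), φ u := by ring
        _ = (∫ u in Ioi (0:ℝ), φ u) * x ^ p := by rw [hxp]; ring


lemma pnorm_mono (N : ℕ) (a b : Fin N → ℝ) (ha : ∀ i, 0 ≤ a i) (hb : ∀ i, 0 ≤ b i)
    (p : ℝ) (hp0 : 0 < p) (hp1 : p ≤ 1)
    (h : ∀ t : ℝ, 0 < t → ∑ i, Real.log (1 + t * a i) ≤ ∑ i, Real.log (1 + t * b i)) :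
    ∑ i, a i ^ p ≤ ∑ i, b i ^ p := by
  rcases eq_or_lt_of_le hp1 with hp1 | hplt
  · subst hp1
    simp only [Real.rpow_one]
    exact sum_le_of_log N a b h
  · set c := ∫ u in Ioi (0:ℝ), Real.log (1 + u) * u ^ (-1 - p) with hc
    have hcpos : 0 < c := phi_pos hp0 hplt
    have hIa : ∀ i, IntegrableOn (fun t : ℝ => Real.log (1 + t * a i) * t ^ (-1 - p)) (Ioi 0) :=
      fun i => (scaled_int hp0 hplt (ha i)).1
    have hIb : ∀ i, IntegrableOn (fun t : ℝ => Real.log (1 + t * b i) * t ^ (-1 - p)) (Ioi 0) :=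
      fun i => (scaled_int hp0 hplt (hb i)).1
    have intsumA : IntegrableOn
        (fun t : ℝ => ∑ i, Real.log (1 + t * a i) * t ^ (-1 - p)) (Ioi 0) :=
      integrable_finset_sum _ (fun i _ => hIa i)
    have intsumB : IntegrableOn
        (fun t : ℝ => ∑ i, Real.log (1 + t * b i) * t ^ (-1 - p)) (Ioi 0) :=
      integrable_finset_sum _ (fun i _ => hIb i)
    have hVA : ∫ t in Ioi (0:ℝ), ∑ i, Real.log (1 + t * a i) * t ^ (-1 - p)
        = c * ∑ i, a i ^ p := by
      rw [integral_finset_sum _ (fun i _ => hIa i)]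
      rw [Finset.mul_sum]
      exact Finset.sum_congr rfl fun i _ => (scaled_int hp0 hplt (ha i)).2
    have hVB : ∫ t in Ioi (0:ℝ), ∑ i, Real.log (1 + t * b i) * t ^ (-1 - p)
        = c * ∑ i, b i ^ p := by
      rw [integral_finset_sum _ (fun i _ => hIb i)]
      rw [Finset.mul_sum]
      exact Finset.sum_congr rfl fun i _ => (scaled_int hp0 hplt (hb i)).2
    have hmono : ∫ t in Ioi (0:ℝ), ∑ i, Real.log (1 + t * a i) * t ^ (-1 - p)
        ≤ ∫ t in Ioi (0:ℝ), ∑ i, Real.log (1 + t * b i) * t ^ (-1 - p) := by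
      apply setIntegral_mono_on intsumA intsumB measurableSet_Ioi
      intro t ht
      have ht0 : (0:ℝ) < t := ht
      rw [← Finset.sum_mul, ← Finset.sum_mul]
      exact mul_le_mul_of_nonneg_right (h t ht0) (Real.rpow_nonneg ht0.le _)
    rw [hVA, hVB] at hmono
    exact le_of_mul_le_mul_left hmono hcpos

theorem stmt9 (K n : ℕ) (hK : 0 < K) (hn : 0 < n) (m : Fin K → ℕ)
    (M M' : ∀ k : Fin K, Matrix (Fin n) (Fin (m k)) ℤ)
    (h01 : ∀ k i j, M k i j = 0 ∨ M k i j = 1)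
    (hint : ∀ k j, ∀ i₁ i₂ i₃ : Fin n, i₁ ≤ i₂ → i₂ ≤ i₃ →
      M k i₁ j = 1 → M k i₃ j = 1 → M k i₂ j = 1)
    (hmod : ∀ k i j, M' k i j ≡ M k i j [ZMOD 2])
    (t : Fin K → ℝ) (ht : ∀ k, 0 ≤ t k) (p : ℝ) (hp0 : 0 < p) (hp1 : p ≤ 1)
    (A A' : Matrix (Fin n) (Fin n) ℝ)
    (hAdef : A = ∑ k, t k • ((M k * (M k)ᵀ).map ((↑) : ℤ → ℝ)))
    (hA'def : A' = ∑ k, t k • ((M' k * (M' k)ᵀ).map ((↑) : ℤ → ℝ)))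
    (hA : A.IsHermitian) (hA' : A'.IsHermitian) :
    (∑ i, (hA.eigenvalues i) ^ p) ^ (1 / p) ≤
      (∑ i, (hA'.eigenvalues i) ^ p) ^ (1 / p) := by
  have psd : A.PosSemidef := psd_of_sum_gram m M t ht A hAdef
  have psd' : A'.PosSemidef := psd_of_sum_gram m M' t ht A' hA'def
  have hlamA : ∀ i, 0 ≤ hA.eigenvalues i := fun i => psd.eigenvalues_nonneg i
  have hlamB : ∀ i, 0 ≤ hA'.eigenvalues i := fun i => psd'.eigenvalues_nonneg i
  have hlog : ∀ s : ℝ, 0 < s →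
      ∑ i, Real.log (1 + s * hA.eigenvalues i) ≤ ∑ i, Real.log (1 + s * hA'.eigenvalues i) := by
    intro s hs
    have hdet : (1 + s • A).det ≤ (1 + s • A').det := by
      have hsmul : ∀ (X : Matrix (Fin n) (Fin n) ℝ)
          (N : ∀ k : Fin K, Matrix (Fin n) (Fin (m k)) ℤ),
          X = ∑ k, t k • ((N k * (N k)ᵀ).map ((↑) : ℤ → ℝ)) →
          (1 : Matrix (Fin n) (Fin n) ℝ) + s • X
            = 1 + ∑ k, (s * t k) • ((N k * (N k)ᵀ).map ((↑) : ℤ → ℝ)) := by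
        intro X N hX
        rw [hX, Finset.smul_sum]
        congr 1
        exact Finset.sum_congr rfl fun k _ => by rw [smul_smul]
      rw [hsmul A M hAdef, hsmul A' M' hA'def]
      exact det_one_add_le m M M' h01 hint hmod (fun k => s * t k)
        (fun k => mul_nonneg hs.le (ht k))
    rw [det_one_add_smul A hA s, det_one_add_smul A' hA' s] at hdet
    have hposA : ∀ i : Fin n, 0 < 1 + s * hA.eigenvalues i :=
      fun i => by have := mul_nonneg hs.le (hlamA i); linarith
    have hposA' : ∀ i : Fin n, 0 < 1 + s * hA'.eigenvalues i :=
      fun i => by have := mul_nonneg hs.le (hlamB i); linarith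
    have hprodA : 0 < ∏ i, (1 + s * hA.eigenvalues i) :=
      Finset.prod_pos fun i _ => hposA i
    have logA : Real.log (∏ i, (1 + s * hA.eigenvalues i))
        = ∑ i, Real.log (1 + s * hA.eigenvalues i) :=
      Real.log_prod (fun i _ => (hposA i).ne')
    have logA' : Real.log (∏ i, (1 + s * hA'.eigenvalues i))
        = ∑ i, Real.log (1 + s * hA'.eigenvalues i) :=
      Real.log_prod (fun i _ => (hposA' i).ne')
    rw [← logA, ← logA']
    exact Real.log_le_log hprodA hdet
  have hsum : ∑ i, (hA.eigenvalues i) ^ p ≤ ∑ i, (hA'.eigenvalues i) ^ p :=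
    pnorm_mono n (hA.eigenvalues) (hA'.eigenvalues) hlamA hlamB p hp0 hp1 hlog
  exact Real.rpow_le_rpow
    (Finset.sum_nonneg fun i _ => Real.rpow_nonneg (hlamA i) p) hsum (by positivity)
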